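/- Let C: u_1,…,u_{2k+1} and C': u'_1,…,u'_{2k'+1} be two odd cycles in K_{r_1,…,r_n} whose vertex sets intersect exactly in the single common vertex u_1 = u'_1, with edges e_i = {u_i, u_{i+1}} (u_{2k+2} := u_1) and e'_i = {u'_i, u'_{i+1}} (u'_{2k'+2} := u'_1). Then Σ_{i=1}^{2k+1} (−1)^i w_{e_i} − Σ_{i=1}^{2k'+1} (−1)^i w_{e'_i} = 0 in ℤ^{d+n}; in particular, the vectors w_{e_1},…,w_{e_{2k+1}}, w_{e'_1},…,w_{e'_{2k'+1}} are linearly dependent. -/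

import Mathlib

/-- The vector `w_e ∈ ℤ^d ⊕ ℤ^n` associated to the edge `e = {a,b}`. -/
def wvec (n d : ℕ) (blk : Fin d → ℕ) (a b : Fin d) : (Fin d → ℤ) × (Fin n → ℤ) :=
  (fun k => (if k = a then 1 else 0) + (if k = b then 1 else 0),
   fun i => if (i : ℕ) = blk a ∨ (i : ℕ) = blk b then 0 else 1)

/-- The rational vector `w_e ∈ ℚ^d ⊕ ℚ^n` associated to the edge `e = {a,b}`. -/
def wvecQ (n d : ℕ) (blk : Fin d → ℕ) (a b : Fin d) : (Fin d → ℚ) × (Fin n → ℚ) :=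
  (fun k => (if k = a then 1 else 0) + (if k = b then 1 else 0),
   fun i => if (i : ℕ) = blk a ∨ (i : ℕ) = blk b then 0 else 1)

def wvecR (R : Type*) [CommRing R] (n d : ℕ) (blk : Fin d → ℕ) (a b : Fin d) :
    (Fin d → R) × (Fin n → R) :=
  (fun k => (if k = a then 1 else 0) + (if k = b then 1 else 0),
   fun i => if (i : ℕ) = blk a ∨ (i : ℕ) = blk b then 0 else 1)

lemma teleA {R : Type*} [CommRing R] (f : ℕ → R) (l : ℕ) :
    ∑ i ∈ Finset.range l, (-1:R)^(i+1) * (f i + f (i+1)) = -f 0 + (-1)^l * f l := by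
  induction l with
  | zero => simp
  | succ l ih => rw [Finset.sum_range_succ, ih, pow_succ]; ring

lemma tele {R : Type*} [CommRing R] (k : ℕ) (f : ℕ → R) :
    ∑ i ∈ Finset.range (2*k+1), (-1:R)^(i+1) * (f i + f ((i+1)%(2*k+1))) = -2 * f 0 := by
  rw [Finset.sum_range_succ]
  have h1 : ∀ i ∈ Finset.range (2*k), (-1:R)^(i+1) * (f i + f ((i+1)%(2*k+1)))
      = (-1:R)^(i+1) * (f i + f (i+1)) := by
    intro i hi
    have := Finset.mem_range.mp hi
    rw [Nat.mod_eq_of_lt (by omega : i+1 < 2*k+1)]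
  rw [Finset.sum_congr rfl h1, teleA]
  have : (2*k+1) % (2*k+1) = 0 := Nat.mod_self _
  rw [this, pow_succ, pow_mul]
  simp
  ring

lemma sum_neg_one_pow {R : Type*} [CommRing R] (k : ℕ) :
    ∑ i ∈ Finset.range (2*k+1), (-1:R)^(i+1) = -1 := by
  have : ∀ i ∈ Finset.range (2*k+1), (-1:R)^(i+1) = -(-1:R)^i := by
    intro i _; rw [pow_succ]; ring
  rw [Finset.sum_congr rfl this, Finset.sum_neg_distrib, neg_one_geom_sum]
  simp [Nat.even_add_one, Nat.even_mul]

lemma key (R : Type*) [CommRing R] (n d : ℕ) (blk : Fin d → ℕ) (k : ℕ) (u : ℕ → Fin d)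
    (hcyc : ∀ i < 2*k+1, blk (u i) ≠ blk (u ((i+1)%(2*k+1)))) :
    ∑ i ∈ Finset.range (2*k+1),
        ((-1:R)^(i+1)) • wvecR R n d blk (u i) (u ((i+1)%(2*k+1)))
    = (fun a : Fin d => if a = u 0 then (-2:R) else 0,
       fun i : Fin n => if (i:ℕ) = blk (u 0) then (1:R) else -1) := by
  refine Prod.ext ?_ ?_
  · rw [Prod.fst_sum]
    funext a
    rw [Finset.sum_apply]
    have : ∀ j ∈ Finset.range (2*k+1),
        (((-1:R)^(j+1)) • wvecR R n d blk (u j) (u ((j+1)%(2*k+1)))).1 a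
        = (-1:R)^(j+1) * ((if a = u j then 1 else 0) + (if a = u ((j+1)%(2*k+1)) then 1 else 0)) := by
      intro j _
      simp only [wvecR, Prod.smul_fst, Pi.smul_apply, smul_eq_mul]
    rw [Finset.sum_congr rfl this, tele k (fun j => if a = u j then (1:R) else 0)]
    split <;> simp_all
  · rw [Prod.snd_sum]
    funext i
    rw [Finset.sum_apply]
    have : ∀ j ∈ Finset.range (2*k+1),
        (((-1:R)^(j+1)) • wvecR R n d blk (u j) (u ((j+1)%(2*k+1)))).2 i
        = (-1:R)^(j+1)
          - (-1:R)^(j+1) * ((if (i:ℕ) = blk (u j) then 1 else 0)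
              + (if (i:ℕ) = blk (u ((j+1)%(2*k+1))) then 1 else 0)) := by
      intro j hj
      have h := hcyc j (Finset.mem_range.mp hj)
      have hiff : (if ((i:ℕ) = blk (u j) ∨ (i:ℕ) = blk (u ((j+1)%(2*k+1)))) then (0:R) else 1)
          = 1 - (if (i:ℕ) = blk (u j) then 1 else 0)
            - (if (i:ℕ) = blk (u ((j+1)%(2*k+1))) then 1 else 0) := by
        by_cases h1 : (i:ℕ) = blk (u j) <;> by_cases h2 : (i:ℕ) = blk (u ((j+1)%(2*k+1)))
        · exact absurd (h1.symm.trans h2) h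
        · rw [if_pos (Or.inl h1), if_pos h1, if_neg h2]; ring
        · rw [if_pos (Or.inr h2), if_neg h1, if_pos h2]; ring
        · rw [if_neg (by tauto), if_neg h1, if_neg h2]; ring
      simp only [wvecR, Prod.smul_snd, Pi.smul_apply, smul_eq_mul]
      rw [hiff]; ring
    rw [Finset.sum_congr rfl this, Finset.sum_sub_distrib, sum_neg_one_pow,
      tele k (fun j => if (i:ℕ) = blk (u j) then (1:R) else 0)]
    split <;> simp_all <;> norm_num

/-- For two odd cycles `C : u_0,…,u_{2k}` and `C' : u'_0,…,u'_{2k'}` of `K_{r_1,…,r_n}`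
meeting exactly in the single common vertex `u_0 = u'_0`, we have
`Σ_{i=1}^{2k+1} (-1)^i w_{e_i} - Σ_{i=1}^{2k'+1} (-1)^i w_{e'_i} = 0`; in particular the
vectors `w_{e_1},…,w_{e_{2k+1}}, w_{e'_1},…,w_{e'_{2k'+1}}` are linearly dependent. -/
theorem stmt_3 (n : ℕ) (hn : 1 ≤ n) (r : ℕ → ℕ)
    (hr1 : ∀ i < n, 1 ≤ r i)
    (hmono : ∀ i j, i ≤ j → j < n → r i ≤ r j)
    (d : ℕ) (hd : d = ∑ i ∈ Finset.range n, r i)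
    (blk : Fin d → ℕ) (hblkn : ∀ a, blk a < n)
    (hcard : ∀ i < n, (Finset.univ.filter (fun a : Fin d => blk a = i)).card = r i)
    (k k' : ℕ) (hk : 1 ≤ k) (hk' : 1 ≤ k') (u u' : ℕ → Fin d)
    (huinj : ∀ i < 2 * k + 1, ∀ j < 2 * k + 1, u i = u j → i = j)
    (hucyc : ∀ i < 2 * k + 1, blk (u i) ≠ blk (u ((i + 1) % (2 * k + 1))))
    (hu'inj : ∀ i < 2 * k' + 1, ∀ j < 2 * k' + 1, u' i = u' j → i = j)
    (hu'cyc : ∀ i < 2 * k' + 1, blk (u' i) ≠ blk (u' ((i + 1) % (2 * k' + 1))))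
    (hcommon : u 0 = u' 0)
    (hmeet : ∀ i < 2 * k + 1, ∀ j < 2 * k' + 1, u i = u' j → i = 0 ∧ j = 0) :
    (∑ i ∈ Finset.range (2 * k + 1),
        ((-1 : ℤ) ^ (i + 1)) • wvec n d blk (u i) (u ((i + 1) % (2 * k + 1)))
      - ∑ i ∈ Finset.range (2 * k' + 1),
        ((-1 : ℤ) ^ (i + 1)) • wvec n d blk (u' i) (u' ((i + 1) % (2 * k' + 1))) = 0) ∧
    ¬ LinearIndependent ℚ
      (Sum.elim
        (fun i : Fin (2 * k + 1) =>
          wvecQ n d blk (u (i : ℕ)) (u (((i : ℕ) + 1) % (2 * k + 1))))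
        (fun i : Fin (2 * k' + 1) =>
          wvecQ n d blk (u' (i : ℕ)) (u' (((i : ℕ) + 1) % (2 * k' + 1))))) := by
  have hw : ∀ a b : Fin d, wvec n d blk a b = wvecR ℤ n d blk a b := fun _ _ => rfl
  have hwQ : ∀ a b : Fin d, wvecQ n d blk a b = wvecR ℚ n d blk a b := fun _ _ => rfl
  constructor
  · simp only [hw]
    rw [key ℤ n d blk k u hucyc, key ℤ n d blk k' u' hu'cyc, hcommon, sub_self]
  · rw [Fintype.not_linearIndependent_iff]
    refine ⟨Sum.elim (fun i : Fin (2*k+1) => (-1:ℚ)^((i:ℕ)+1))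
      (fun i : Fin (2*k'+1) => -(-1:ℚ)^((i:ℕ)+1)), ?_,
      ⟨Sum.inl ⟨0, by omega⟩, by simp⟩⟩
    rw [Fintype.sum_sum_type]
    simp only [Sum.elim_inl, Sum.elim_inr, hwQ, neg_smul]
    rw [Finset.sum_neg_distrib,
      Fin.sum_univ_eq_sum_range
        (fun j => (-1:ℚ)^(j+1) • wvecR ℚ n d blk (u j) (u ((j+1)%(2*k+1)))),
      Fin.sum_univ_eq_sum_range
        (fun j => (-1:ℚ)^(j+1) • wvecR ℚ n d blk (u' j) (u' ((j+1)%(2*k'+1)))),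
      key ℚ n d blk k u hucyc, key ℚ n d blk k' u' hu'cyc, hcommon, add_neg_cancel]
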